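/- Let n, p be positive natural numbers, A an n×n complex matrix, C a p×n complex matrix. Let V₁, V₂ be p×p positive definite Hermitian matrices and W₁, W₂ be n×n positive semidefinite Hermitian matrices with V₁ ⪯ V₂ and W₁ ⪯ W₂. Suppose Σ₁ and Σ₂ are positive semidefinite Hermitian matrices satisfying the filter algebraic Riccati equations A·Σᵢ + Σᵢ·Aᴴ − Σᵢ·Cᴴ·Vᵢ⁻¹·C·Σᵢ + Wᵢ = 0 for i = 1, 2, and that each closed-loop matrix A − Σᵢ·Cᴴ·Vᵢ⁻¹·C is Hurwitz. Then Σ₁ ⪯ Σ₂. -/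

import Mathlib

open Matrix
open scoped ComplexOrder
open Filter NormedSpace Polynomial
open scoped Nat Topology NNReal ENNReal

/-- A square complex matrix is Hurwitz if every eigenvalue has
strictly negative real part. -/
def IsHurwitz {n : ℕ} (M : Matrix (Fin n) (Fin n) ℂ) : Prop :=
  ∀ z ∈ spectrum ℂ M, z.re < 0

attribute [local instance] Matrix.linftyOpNormedAddCommGroup Matrix.linftyOpNormedRing
  Matrix.linftyOpNormedAlgebra

variable {n : ℕ}

lemma exists_eigenvector {F : Matrix (Fin n) (Fin n) ℂ} {μ : ℂ}
    (hμ : μ ∈ spectrum ℂ F) : ∃ v : Fin n → ℂ, v ≠ 0 ∧ F *ᵥ v = μ • v := by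
  rw [spectrum.mem_iff, Matrix.isUnit_iff_isUnit_det, isUnit_iff_ne_zero, not_not] at hμ
  obtain ⟨v, hv0, hv⟩ := (Matrix.exists_mulVec_eq_zero_iff).2 hμ
  refine ⟨v, hv0, ?_⟩
  rw [Matrix.sub_mulVec] at hv
  have h2 : (algebraMap ℂ (Matrix (Fin n) (Fin n) ℂ) μ) *ᵥ v = μ • v := by
    have : (algebraMap ℂ (Matrix (Fin n) (Fin n) ℂ) μ) = μ • (1 : Matrix (Fin n) (Fin n) ℂ) := by
      rw [Algebra.algebraMap_eq_smul_one]
    rw [this, Matrix.smul_mulVec, Matrix.one_mulVec]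
  rw [h2, sub_eq_zero] at hv
  exact hv.symm

lemma pow_mulVec {F : Matrix (Fin n) (Fin n) ℂ} {μ : ℂ} {v : Fin n → ℂ}
    (hv : F *ᵥ v = μ • v) (k : ℕ) : (F ^ k) *ᵥ v = (μ ^ k) • v := by
  induction k with
  | zero => simp
  | succ k ih =>
    rw [pow_succ, ← Matrix.mulVec_mulVec, hv, Matrix.mulVec_smul, ih, smul_smul, pow_succ, mul_comm]

lemma aeval_mulVec {F : Matrix (Fin n) (Fin n) ℂ} {μ : ℂ} {v : Fin n → ℂ}
    (hv : F *ᵥ v = μ • v) (q : ℂ[X]) : (aeval F q) *ᵥ v = (q.eval μ) • v := by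
  induction q using Polynomial.induction_on' with
  | add p q hp hq => rw [map_add, Matrix.add_mulVec, hp, hq, eval_add, add_smul]
  | monomial k c =>
    rw [aeval_monomial, eval_monomial]
    rw [Algebra.algebraMap_eq_smul_one, smul_one_mul, Matrix.smul_mulVec,
      pow_mulVec hv, smul_smul]

/-- mulVec as a continuous linear map in the matrix argument. -/
noncomputable def mulVecCLM (v : Fin n → ℂ) : Matrix (Fin n) (Fin n) ℂ →L[ℂ] (Fin n → ℂ) :=
  LinearMap.toContinuousLinearMap
    { toFun := fun M => M *ᵥ v
      map_add' := fun M N => Matrix.add_mulVec M N v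
      map_smul' := fun c M => Matrix.smul_mulVec c M v }

lemma exp_mulVec {F : Matrix (Fin n) (Fin n) ℂ} {μ : ℂ} {v : Fin n → ℂ}
    (hv : F *ᵥ v = μ • v) : (exp F) *ᵥ v = (Complex.exp μ) • v := by
  have hs : Summable fun k : ℕ => (k !⁻¹ : ℂ) • F ^ k := expSeries_summable' F
  have h1 : (exp F) *ᵥ v = mulVecCLM v (exp F) := rfl
  rw [h1, exp_eq_tsum (𝕂 := ℂ), ContinuousLinearMap.map_tsum _ hs]
  have h2 : ∀ k : ℕ, mulVecCLM v ((k !⁻¹ : ℂ) • F ^ k) = ((k !⁻¹ : ℂ) • μ ^ k) • v := by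
    intro k
    rw [_root_.map_smul]
    show (k !⁻¹ : ℂ) • ((F ^ k) *ᵥ v) = _
    rw [pow_mulVec hv, smul_smul, smul_eq_mul]
  rw [tsum_congr h2, Summable.tsum_smul_const (expSeries_summable' (𝕂 := ℂ) μ) v,
    (exp_series_hasSum_exp' (𝕂 := ℂ) μ).tsum_eq, Complex.exp_eq_exp_ℂ]

lemma exp_eq_aeval (F : Matrix (Fin n) (Fin n) ℂ) :
    ∃ q : ℂ[X], exp F = aeval F q := by
  have hmem : exp F ∈ Algebra.adjoin ℂ ({F} : Set (Matrix (Fin n) (Fin n) ℂ)) := by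
    set S : Submodule ℂ (Matrix (Fin n) (Fin n) ℂ) :=
      Subalgebra.toSubmodule (Algebra.adjoin ℂ ({F} : Set (Matrix (Fin n) (Fin n) ℂ)))
    have hc : IsClosed (S : Set (Matrix (Fin n) (Fin n) ℂ)) := S.closed_of_finiteDimensional
    have hsum : HasSum (fun k : ℕ => (k !⁻¹ : ℂ) • F ^ k) (exp F) := exp_series_hasSum_exp' F
    have htend := hsum.tendsto_sum_nat
    have hF : F ∈ Algebra.adjoin ℂ ({F} : Set (Matrix (Fin n) (Fin n) ℂ)) :=
      Algebra.self_mem_adjoin_singleton ℂ F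
    have hmemS : ∀ N : ℕ, (∑ k ∈ Finset.range N, (k !⁻¹ : ℂ) • F ^ k) ∈ S := by
      intro N
      refine Submodule.sum_mem _ fun k _ => Submodule.smul_mem _ _ ?_
      exact Subalgebra.pow_mem _ hF k
    exact hc.mem_of_tendsto htend (Filter.Eventually.of_forall hmemS)
  rw [Algebra.adjoin_singleton_eq_range_aeval] at hmem
  obtain ⟨q, hq⟩ := hmem
  exact ⟨q, hq.symm⟩

lemma pow_tendsto_zero (hn : 0 < n) {a : Matrix (Fin n) (Fin n) ℂ}
    (h : ∀ μ ∈ spectrum ℂ a, ‖μ‖₊ < 1) :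
    Tendsto (fun k : ℕ => a ^ k) atTop (𝓝 0) := by
  haveI : Nonempty (Fin n) := ⟨⟨0, hn⟩⟩
  have hρ : spectralRadius ℂ a < (1 : ℝ≥0) :=
    spectrum.spectralRadius_lt_of_forall_lt a h
  rw [ENNReal.coe_one] at hρ
  obtain ⟨r, hr1, hr2⟩ := ENNReal.lt_iff_exists_nnreal_btwn.1 hρ
  have hr2' : (r : ℝ) < 1 := by exact_mod_cast hr2
  have hgel := spectrum.pow_nnnorm_pow_one_div_tendsto_nhds_spectralRadius a
  have hev : ∀ᶠ k : ℕ in atTop, (‖a ^ k‖₊ : ℝ≥0∞) ^ (1 / (k : ℝ)) < (r : ℝ≥0∞) :=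
    hgel.eventually_lt_const hr1
  have hev2 : ∀ᶠ k : ℕ in atTop, ‖a ^ k‖ ≤ (r : ℝ) ^ k := by
    filter_upwards [hev, eventually_ge_atTop 1] with k hk hk1
    have hk0 : (k : ℝ) ≠ 0 := Nat.cast_ne_zero.2 (by omega)
    have h3 := ENNReal.rpow_le_rpow hk.le (by positivity : (0:ℝ) ≤ (k:ℝ))
    rw [← ENNReal.rpow_mul, one_div_mul_cancel hk0, ENNReal.rpow_one,
      ENNReal.rpow_natCast] at h3
    have h4 : ‖a ^ k‖₊ ≤ r ^ k := by
      rw [← ENNReal.coe_pow] at h3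
      exact_mod_cast h3
    calc ‖a ^ k‖ = (‖a ^ k‖₊ : ℝ) := rfl
    _ ≤ ((r ^ k : ℝ≥0) : ℝ) := by exact_mod_cast h4
    _ = (r : ℝ) ^ k := by push_cast; ring
  refine tendsto_zero_iff_norm_tendsto_zero.2 ?_
  refine squeeze_zero' (Eventually.of_forall fun k => norm_nonneg _) hev2 ?_
  exact tendsto_pow_atTop_nhds_zero_of_lt_one (by positivity) hr2'

lemma eval_eq_exp_on_spectrum (hn : 0 < n) {F : Matrix (Fin n) (Fin n) ℂ} {q : ℂ[X]}
    (hq : exp F = aeval F q) {μ : ℂ} (hμ : μ ∈ spectrum ℂ F) :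
    q.eval μ = Complex.exp μ := by
  obtain ⟨v, hv0, hv⟩ := exists_eigenvector hμ
  have h1 : (exp F) *ᵥ v = (Complex.exp μ) • v := exp_mulVec hv
  have h2 : (exp F) *ᵥ v = (q.eval μ) • v := by rw [hq]; exact aeval_mulVec hv q
  obtain ⟨i, hi⟩ := Function.ne_iff.1 hv0
  have := congrFun (h1.symm.trans h2) i
  simp only [Pi.smul_apply, smul_eq_mul, Pi.zero_apply] at this hi
  exact (mul_right_cancel₀ hi this).symm

lemma exp_pow_tendsto_zero (hn : 0 < n) {F : Matrix (Fin n) (Fin n) ℂ}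
    (hF : ∀ z ∈ spectrum ℂ F, z.re < 0) :
    Tendsto (fun k : ℕ => (exp F) ^ k) atTop (𝓝 0) := by
  haveI : Nonempty (Fin n) := ⟨⟨0, hn⟩⟩
  obtain ⟨q, hq⟩ := exp_eq_aeval F
  refine pow_tendsto_zero hn fun μ hμ => ?_
  rw [hq, spectrum.map_polynomial_aeval_of_nonempty F q (spectrum.nonempty F)] at hμ
  obtain ⟨lam, hlam, rfl⟩ := hμ
  have he : q.eval lam = Complex.exp lam := eval_eq_exp_on_spectrum hn hq hlam
  show ‖q.eval lam‖₊ < 1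
  rw [he]
  have : ‖Complex.exp lam‖ < 1 := by
    rw [Complex.norm_exp]
    exact Real.exp_lt_one_iff.2 (hF lam hlam)
  exact this

/-- The real part of the quadratic form `xᴴ M x` as a continuous linear map in `M`. -/
noncomputable def quadCLM (x : Fin n → ℂ) : Matrix (Fin n) (Fin n) ℂ →L[ℝ] ℝ :=
  Complex.reCLM.comp (LinearMap.toContinuousLinearMap
    { toFun := fun M => dotProduct (star x) (M *ᵥ x)
      map_add' := fun M N => by simp [Matrix.add_mulVec, dotProduct_add]
      map_smul' := fun c M => by simp [Matrix.smul_mulVec, dotProduct_smul] })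

lemma quadCLM_apply (x : Fin n → ℂ) (M : Matrix (Fin n) (Fin n) ℂ) :
    quadCLM x M = (dotProduct (star x) (M *ᵥ x)).re := rfl

lemma lyapunov (hn : 0 < n) {F Δ Q : Matrix (Fin n) (Fin n) ℂ}
    (hΔ : Δ.IsHermitian) (hQ : Q.PosSemidef) (heq : F * Δ + Δ * Fᴴ + Q = 0)
    (hF : ∀ z ∈ spectrum ℂ F, z.re < 0) : Δ.PosSemidef := by
  have hexpR : exp F = exp F := rfl
  have hdecay : Tendsto (fun k : ℕ => (exp F) ^ k) atTop (𝓝 0) := by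
    rw [hexpR]; exact exp_pow_tendsto_zero hn hF
  set E : ℝ → Matrix (Fin n) (Fin n) ℂ := fun t => exp (t • F) with hE
  set E' : ℝ → Matrix (Fin n) (Fin n) ℂ := fun t => exp (t • Fᴴ) with hE'
  have hconj : ∀ t : ℝ, (E t)ᴴ = E' t := by
    intro t
    rw [hE, hE', ← Matrix.exp_conjTranspose]
    congr 1
    ext i j
    simp [Matrix.conjTranspose_apply]
  have hQ' : F * Δ + Δ * Fᴴ = -Q := eq_neg_of_add_eq_zero_left heq
  have hG : ∀ t : ℝ, HasDerivAt (fun s => E s * Δ * E' s) (E t * (-Q) * E' t) t := by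
    intro t
    have h1 : HasDerivAt E (E t * F) t := hasDerivAt_exp_smul_const F t
    have h2 : HasDerivAt E' (Fᴴ * E' t) t := hasDerivAt_exp_smul_const' Fᴴ t
    have h3 := (h1.mul_const Δ).mul h2
    have h4 : E t * F * Δ * E' t + E t * Δ * (Fᴴ * E' t) = E t * (-Q) * E' t := by
      rw [← hQ']; noncomm_ring
    rw [h4] at h3
    exact h3
  -- quadratic form
  refine posSemidef_iff_dotProduct_mulVec.mpr ⟨hΔ, fun x => ?_⟩
  set Φ : Matrix (Fin n) (Fin n) ℂ →L[ℝ] ℝ := quadCLM x with hΦ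
  have hΦ_apply : ∀ M, Φ M = (dotProduct (star x) (M *ᵥ x)).re := fun M => quadCLM_apply x M
  set f : ℝ → ℝ := fun t => Φ (E t * Δ * E' t) with hf
  have hf' : ∀ t, HasDerivAt f (Φ (E t * (-Q) * E' t)) t := fun t =>
    (Φ.hasFDerivAt.comp_hasDerivAt t (hG t))
  have hderiv_nonpos : ∀ t, Φ (E t * (-Q) * E' t) ≤ 0 := by
    intro t
    have hps : (E t * Q * (E t)ᴴ).PosSemidef := hQ.mul_mul_conjTranspose_same (E t)
    have h0 : E t * (-Q) * E' t = -(E t * Q * (E t)ᴴ) := by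
      rw [hconj t]; noncomm_ring
    rw [h0, map_neg, neg_nonpos, hΦ_apply]
    have := hps.re_dotProduct_nonneg x
    simpa using this
  have hmono : Antitone f :=
    antitone_of_deriv_nonpos (fun t => (hf' t).differentiableAt)
      (fun t => by rw [(hf' t).deriv]; exact hderiv_nonpos t)
  have hEk : ∀ k : ℕ, E (k : ℝ) * Δ * E' (k : ℝ)
      = (exp F) ^ k * Δ * ((exp F) ^ k)ᴴ := by
    intro k
    have e1 : E (k : ℝ) = (exp F) ^ k := by
      rw [hE]
      show exp ((k : ℝ) • F) = _
      rw [Nat.cast_smul_eq_nsmul, Matrix.exp_nsmul]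
    have e2 : E' (k : ℝ) = ((exp F) ^ k)ᴴ := by
      rw [hE']
      show exp ((k : ℝ) • Fᴴ) = _
      rw [Nat.cast_smul_eq_nsmul, Matrix.exp_nsmul, Matrix.exp_conjTranspose,
        Matrix.conjTranspose_pow]
    rw [e1, e2]
  have hdecayH : Tendsto (fun k : ℕ => ((exp F) ^ k)ᴴ) atTop (𝓝 0) := by
    have hc : Continuous fun M : Matrix (Fin n) (Fin n) ℂ => Mᴴ :=
      continuous_id.matrix_conjTranspose
    have h5 := (hc.tendsto 0).comp hdecay
    rw [Matrix.conjTranspose_zero] at h5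
    exact h5
  have hlim : Tendsto (fun k : ℕ => f (k : ℝ)) atTop (𝓝 0) := by
    have hT1 : Tendsto (fun k : ℕ => (exp F) ^ k * Δ) atTop (𝓝 (0 * Δ)) :=
      hdecay.mul tendsto_const_nhds
    have hT : Tendsto (fun k : ℕ => (exp F) ^ k * Δ * ((exp F) ^ k)ᴴ) atTop
        (𝓝 (0 * Δ * 0)) := hT1.mul hdecayH
    rw [show (0 : Matrix (Fin n) (Fin n) ℂ) * Δ * 0 = 0 by simp] at hT
    have := (Φ.continuous.tendsto 0).comp hT
    rw [map_zero] at this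
    refine this.congr fun k => ?_
    simp only [Function.comp_apply, hf, hEk k]
  have hle : (0:ℝ) ≤ f 0 :=
    le_of_tendsto hlim (Eventually.of_forall fun k => hmono (Nat.cast_nonneg k))
  have hf0 : f 0 = (dotProduct (star x) (Δ *ᵥ x)).re := by
    rw [hf]
    show Φ (E 0 * Δ * E' 0) = _
    have : E 0 * Δ * E' 0 = Δ := by
      rw [hE, hE']
      show exp ((0:ℝ) • F) * Δ * exp ((0:ℝ) • Fᴴ) = Δ
      simp [exp_zero]
    rw [this, hΦ_apply]
  -- the quadratic form is real since Δ is Hermitian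
  have hreal : (dotProduct (star x) (Δ *ᵥ x)).im = 0 := by
    have h1 : star (dotProduct (star x) (Δ *ᵥ x)) = dotProduct (star x) (Δ *ᵥ x) := by
      rw [← Matrix.star_dotProduct_star, star_star, Matrix.star_mulVec, hΔ.eq,
        ← Matrix.dotProduct_mulVec]
    rw [← Complex.conj_eq_iff_im]
    exact h1
  rw [Complex.le_def]
  refine ⟨by simpa [hf0] using hle, by simp [hreal]⟩

lemma inv_sub_inv_posSemidef {p : ℕ} {V₁ V₂ : Matrix (Fin p) (Fin p) ℂ}
    (hV₁ : V₁.PosDef) (hV₂ : V₂.PosDef) (hV : (V₂ - V₁).PosSemidef) :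
    (V₁⁻¹ - V₂⁻¹).PosSemidef := by
  have h1d : IsUnit V₁.det := hV₁.det_pos.ne'.isUnit
  have h2d : IsUnit V₂.det := hV₂.det_pos.ne'.isUnit
  have hm1 : V₁ * V₁⁻¹ = 1 := Matrix.mul_nonsing_inv _ h1d
  have hm1' : V₁⁻¹ * V₁ = 1 := Matrix.nonsing_inv_mul _ h1d
  have hm2 : V₂ * V₂⁻¹ = 1 := Matrix.mul_nonsing_inv _ h2d
  have hm2' : V₂⁻¹ * V₂ = 1 := Matrix.nonsing_inv_mul _ h2d
  have h2h : (V₂⁻¹)ᴴ = V₂⁻¹ := hV₂.inv.isHermitian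
  have hDh : (V₂ - V₁)ᴴ = V₂ - V₁ := hV.isHermitian
  have i1 : V₁⁻¹ * (V₂ - V₁) * V₂⁻¹ = V₁⁻¹ - V₂⁻¹ := by
    rw [Matrix.mul_sub, hm1', Matrix.sub_mul, one_mul, Matrix.mul_assoc, hm2, Matrix.mul_one]
  have i2 : V₂⁻¹ * (V₂ - V₁) * V₁⁻¹ = V₁⁻¹ - V₂⁻¹ := by
    rw [Matrix.mul_sub, hm2', Matrix.sub_mul, one_mul, Matrix.mul_assoc, hm1, Matrix.mul_one]
  have key : V₁⁻¹ - V₂⁻¹ =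
      ((V₂ - V₁) * V₂⁻¹)ᴴ * V₁⁻¹ * ((V₂ - V₁) * V₂⁻¹) + (V₂⁻¹)ᴴ * (V₂ - V₁) * V₂⁻¹ := by
    rw [Matrix.conjTranspose_mul, h2h, hDh]
    have e1 : V₂⁻¹ * (V₂ - V₁) * V₁⁻¹ * ((V₂ - V₁) * V₂⁻¹) + V₂⁻¹ * (V₂ - V₁) * V₂⁻¹
        = V₂⁻¹ * (V₂ - V₁) * (V₁⁻¹ * (V₂ - V₁) * V₂⁻¹ + V₂⁻¹) := by noncomm_ring
    rw [e1, i1, sub_add_cancel, i2]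
  rw [key]
  exact ((hV₁.inv.posSemidef).conjTranspose_mul_mul_same _).add
    (hV.conjTranspose_mul_mul_same _)

/-- The stabilizing solution of the continuous-time filter algebraic Riccati
equation is monotone in the noise covariances `V` and `W` (Lemma 4). -/
theorem filter_riccati_solution_monotone {n p : ℕ} (hn : 0 < n) (hp : 0 < p)
    (A : Matrix (Fin n) (Fin n) ℂ) (C : Matrix (Fin p) (Fin n) ℂ)
    (V₁ V₂ : Matrix (Fin p) (Fin p) ℂ) (hV₁ : V₁.PosDef) (hV₂ : V₂.PosDef)
    (W₁ W₂ : Matrix (Fin n) (Fin n) ℂ) (hW₁ : W₁.PosSemidef) (hW₂ : W₂.PosSemidef)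
    (hV : (V₂ - V₁).PosSemidef) (hW : (W₂ - W₁).PosSemidef)
    (S₁ S₂ : Matrix (Fin n) (Fin n) ℂ) (hS1 : S₁.PosSemidef) (hS₂ : S₂.PosSemidef)
    (hRic₁ : A * S₁ + S₁ * Aᴴ - S₁ * Cᴴ * V₁⁻¹ * C * S₁ + W₁ = 0)
    (hRic₂ : A * S₂ + S₂ * Aᴴ - S₂ * Cᴴ * V₂⁻¹ * C * S₂ + W₂ = 0)
    (hHur₁ : IsHurwitz (A - S₁ * Cᴴ * V₁⁻¹ * C))
    (hHur₂ : IsHurwitz (A - S₂ * Cᴴ * V₂⁻¹ * C)) :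
    (S₂ - S₁).PosSemidef := by
  
  set K₁ : Matrix (Fin n) (Fin n) ℂ := Cᴴ * V₁⁻¹ * C with hK₁def
  set K₂ : Matrix (Fin n) (Fin n) ℂ := Cᴴ * V₂⁻¹ * C with hK₂def
  set Δ : Matrix (Fin n) (Fin n) ℂ := S₂ - S₁ with hΔdef
  set F : Matrix (Fin n) (Fin n) ℂ := A - S₂ * K₂ with hFdef
  -- Hermitian facts
  have hΔh : Δ.IsHermitian := hS₂.isHermitian.sub hS1.isHermitian
  have hK₂psd : K₂.PosSemidef := (hV₂.inv.posSemidef).conjTranspose_mul_mul_same C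
  have hKsub : (K₁ - K₂).PosSemidef := by
    have : K₁ - K₂ = Cᴴ * (V₁⁻¹ - V₂⁻¹) * C := by
      rw [hK₁def, hK₂def]
      simp only [Matrix.mul_sub, Matrix.sub_mul, Matrix.mul_assoc]
    rw [this]
    exact (inv_sub_inv_posSemidef hV₁ hV₂ hV).conjTranspose_mul_mul_same C
  -- the residual matrix
  set Q : Matrix (Fin n) (Fin n) ℂ := Δ * K₂ * Δ + S₁ * (K₁ - K₂) * S₁ + (W₂ - W₁) with hQdef
  have hQpsd : Q.PosSemidef := by
    have h1 : (Δ * K₂ * Δ).PosSemidef := by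
      have := hK₂psd.conjTranspose_mul_mul_same Δ
      rwa [hΔh.eq] at this
    have h2 : (S₁ * (K₁ - K₂) * S₁).PosSemidef := by
      have := hKsub.conjTranspose_mul_mul_same S₁
      rwa [hS1.isHermitian.eq] at this
    exact (h1.add h2).add hW
  -- conjugate transpose of F
  have hFH : Fᴴ = Aᴴ - K₂ * S₂ := by
    rw [hFdef, Matrix.conjTranspose_sub, Matrix.conjTranspose_mul, hK₂psd.isHermitian.eq,
      hS₂.isHermitian.eq]
  -- the Lyapunov equation
  have heq : F * Δ + Δ * Fᴴ + Q = 0 := by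
    have expand : F * Δ + Δ * Fᴴ + Q =
        (A * S₂ + S₂ * Aᴴ - S₂ * K₂ * S₂ + W₂) - (A * S₁ + S₁ * Aᴴ - S₁ * K₁ * S₁ + W₁) := by
      rw [hFH, hFdef, hQdef, hΔdef]
      simp only [Matrix.mul_sub, Matrix.sub_mul, Matrix.mul_assoc]
      abel
    have r1 : A * S₁ + S₁ * Aᴴ - S₁ * K₁ * S₁ + W₁ = 0 := by
      rw [hK₁def, ← hRic₁]
      simp only [Matrix.mul_assoc]
    have r2 : A * S₂ + S₂ * Aᴴ - S₂ * K₂ * S₂ + W₂ = 0 := by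
      rw [hK₂def, ← hRic₂]
      simp only [Matrix.mul_assoc]
    rw [expand, r1, r2, sub_zero]
  -- Hurwitz property of F
  have hFhur : ∀ z ∈ spectrum ℂ F, z.re < 0 := by
    have : F = A - S₂ * Cᴴ * V₂⁻¹ * C := by
      rw [hFdef, hK₂def]; simp only [Matrix.mul_assoc]
    rw [this]
    exact hHur₂
  exact lyapunov hn hΔh hQpsd heq hFhur
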